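/- In ℓ₄² (ℝ² with norm ‖(x,y)‖ = (x⁴ + y⁴)^{1/4}), a pair of unit vectors ((x, y), (x₁, y₁)) is not a CPP if and only if xy = 0 and x₁y₁ ≠ 0. -/

import Mathlib

open Metric

/-- Birkhoff-James orthogonality: `x ⊥_B y` iff `‖x + t y‖ ≥ ‖x‖` for all real `t`. -/
def BJOrth {X : Type*} [NormedAddCommGroup X] [NormedSpace ℝ X] (x y : X) : Prop :=
  ∀ t : ℝ, ‖x‖ ≤ ‖x + t • y‖

/-- `(x, y)` is a compatible point pair with constant `(r, μ)`. -/
def IsCPPConst {X Y : Type*} [NormedAddCommGroup X] [NormedSpace ℝ X]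
    [NormedAddCommGroup Y] [NormedSpace ℝ Y] (x : X) (y : Y) (r μ : ℝ) : Prop :=
  ∀ z : X, ‖z‖ = 1 → BJOrth x z → ∀ w : Y, ‖w‖ = 1 → BJOrth y w →
    ∀ a b : ℝ, ‖a • x + b • z - x‖ ≤ r → ‖a • x + b • z‖ = 1 →
      ‖a • y + (b * μ) • w‖ ≤ 1

/-- `(x, y)` is a compatible point pair (CPP). -/
def IsCPP {X Y : Type*} [NormedAddCommGroup X] [NormedSpace ℝ X]
    [NormedAddCommGroup Y] [NormedSpace ℝ Y] (x : X) (y : Y) : Prop :=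
  ∃ r > 0, ∃ μ > 0, IsCPPConst x y r μ

/-- `(x, y)` is a weakly compatible point pair (weak CPP). -/
def IsWeakCPP {X Y : Type*} [NormedAddCommGroup X] [NormedSpace ℝ X]
    [NormedAddCommGroup Y] [NormedSpace ℝ Y] (x : X) (y : Y) : Prop :=
  ∃ z : X, ‖z‖ = 1 ∧ BJOrth x z ∧ ∃ w : Y, ‖w‖ = 1 ∧ BJOrth y w ∧
    ∃ r > 0, ∃ μ > 0, ∀ a b : ℝ, ‖a • x + b • z - x‖ ≤ r → ‖a • x + b • z‖ = 1 →
      ‖a • y + (b * μ) • w‖ ≤ 1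

/-- A normed space is smooth if every unit vector has a unique supporting functional. -/
def SmoothSp (X : Type*) [NormedAddCommGroup X] [NormedSpace ℝ X] : Prop :=
  ∀ x : X, ‖x‖ = 1 → ∃! f : X →L[ℝ] ℝ, ‖f‖ = 1 ∧ f x = 1

instance : Fact ((1:ENNReal) ≤ 4) := ⟨by norm_num⟩

noncomputable abbrev L4 := PiLp 4 (fun _ : Fin 2 => ℝ)

/- ## auxiliary lemmas -/

lemma norm_pow4 (p : L4) : ‖p‖^4 = (p 0)^4 + (p 1)^4 := by
  have habs : ∀ x : ℝ, |x| ^ (4:ℝ) = x^4 := fun x => by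
    rw [show (4:ℝ) = ((4:ℕ):ℝ) by norm_num, Real.rpow_natCast, pow_abs,
      abs_of_nonneg (by positivity)]
  have h : ‖p‖ = ((p 0)^4 + (p 1)^4) ^ ((1:ℝ)/4) := by
    rw [PiLp.norm_eq_sum (by norm_num : 0 < (4:ENNReal).toReal)]
    norm_num [Fin.sum_univ_two, Real.norm_eq_abs, habs]
  rw [h, ← Real.rpow_natCast (((p 0)^4 + (p 1)^4) ^ ((1:ℝ)/4)) 4,
    ← Real.rpow_mul (by positivity)]
  norm_num

lemma norm_le4 (p : L4) (s : ℝ) (hs : 0 ≤ s) : ‖p‖ ≤ s ↔ (p 0)^4 + (p 1)^4 ≤ s^4 := by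
  rw [← norm_pow4, pow_le_pow_iff_left₀ (norm_nonneg p) hs (by norm_num)]

lemma norm_ge4 (p : L4) (s : ℝ) (hs : 0 ≤ s) : s ≤ ‖p‖ ↔ s^4 ≤ (p 0)^4 + (p 1)^4 := by
  rw [← norm_pow4, pow_le_pow_iff_left₀ hs (norm_nonneg p) (by norm_num)]

lemma norm_eq4 (p : L4) (s : ℝ) (hs : 0 ≤ s) : ‖p‖ = s ↔ (p 0)^4 + (p 1)^4 = s^4 := by
  rw [← norm_pow4]
  exact ⟨fun h => by rw [h], fun h => (pow_left_inj₀ (norm_nonneg p) hs (by norm_num)).1 h⟩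

lemma bj_D (u z : L4) (hu : ‖u‖ = 1) (h : BJOrth u z) :
    (u 0)^3 * z 0 + (u 1)^3 * z 1 = 0 := by
  set f : ℝ → ℝ := fun t => (u 0 + t * z 0)^4 + (u 1 + t * z 1)^4 with hf
  have hnorm : ∀ t : ℝ, ‖u + t • z‖^4 = f t := by
    intro t
    rw [norm_pow4]
    simp [hf, PiLp.add_apply, PiLp.smul_apply]
  have hf0 : f 0 = 1 := by
    have := hnorm 0
    simp only [zero_smul, add_zero] at this
    rw [← this, hu]; norm_num
  have hmin : IsLocalMin f 0 := by
    apply Filter.Eventually.of_forall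
    intro t
    rw [hf0, ← hnorm t]
    calc (1:ℝ) = ‖u‖^4 := by rw [hu]; norm_num
    _ ≤ ‖u + t • z‖^4 := by
        apply pow_le_pow_left₀ (norm_nonneg u) (h t)
  have hd : HasDerivAt f (4*(u 0)^3*(z 0) + 4*(u 1)^3*(z 1)) 0 := by
    have h1 : ∀ i : Fin 2, HasDerivAt (fun t:ℝ => (u i + t * z i)^4) (4 * (u i)^3 * z i) 0 := by
      intro i
      have : HasDerivAt (fun t:ℝ => u i + t * z i) (z i) 0 := by
        simpa using ((hasDerivAt_id (0:ℝ)).mul_const (z i)).const_add (u i)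
      have h4 := this.fun_pow 4
      exact h4.congr_deriv (by norm_num)
    exact (h1 0).add (h1 1)
  have hz := hmin.deriv_eq_zero
  rw [hd.deriv] at hz
  linarith

lemma bj_lower (u z : L4) (hu : ‖u‖ = 1) (h : BJOrth u z) (α β : ℝ) :
    |α| ≤ ‖α • u + β • z‖ := by
  rcases eq_or_ne α 0 with h0 | h0
  · simp [h0]
  · have e : α • u + β • z = α • (u + (β/α) • z) := by
      rw [smul_add, smul_smul]
      congr 1
      field_simp
    rw [e, norm_smul, Real.norm_eq_abs]
    nth_rewrite 1 [show |α| = |α| * ‖u‖ by rw [hu, mul_one]]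
    exact mul_le_mul_of_nonneg_left (h _) (abs_nonneg α)

lemma n1 (x y s : ℝ) : x^4 + y^4 ≤ (x + s*y^3)^4 + (y - s*x^3)^4 := by
  rcases eq_or_ne (x^12 + y^12) 0 with hC | hC
  · have hx : x = 0 := by
      have h0 : x^12 = 0 := le_antisymm (by nlinarith [show (0:ℝ) ≤ y^12 by positivity]) (by positivity)
      exact pow_eq_zero_iff (by norm_num : (12:ℕ) ≠ 0) |>.1 h0
    have hy : y = 0 := by
      have h0 : y^12 = 0 := le_antisymm (by nlinarith [show (0:ℝ) ≤ x^12 by positivity]) (by positivity)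
      exact pow_eq_zero_iff (by norm_num : (12:ℕ) ≠ 0) |>.1 h0
    subst hx; subst hy; norm_num
  · have hCpos : 0 < x^12 + y^12 := lt_of_le_of_ne (by positivity) (Ne.symm hC)
    have h4B : 4*(x*y*(y^8 - x^8))^2 ≤ 6*(x^2*y^6 + x^6*y^2)*(x^12 + y^12) := by
      nlinarith [mul_nonneg (sq_nonneg (x*y*(x^4+y^4))) (show (0:ℝ) ≤ x^8 + x^4*y^4 + y^8 by positivity)]
    have key : 0 ≤ 6*(x^2*y^6 + x^6*y^2) + 4*(x*y*(y^8 - x^8))*s + (x^12 + y^12)*s^2 := by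
      nlinarith [sq_nonneg ((x^12 + y^12)*s + 2*(x*y*(y^8 - x^8))), hCpos, h4B]
    nlinarith [mul_nonneg (sq_nonneg s) key]

lemma n2 (u0 u1 z0 z1 : ℝ) (h1 : u0^4+u1^4 = 1) (h2 : z0^4+z1^4 = 1)
    (h3 : u0^3*z0 + u1^3*z1 = 0) : u0^2*u1^2 ≤ u0^2*z0^2 + u1^2*z1^2 := by
  rcases eq_or_ne u0 0 with h | h
  · subst h; nlinarith [sq_nonneg (u1*z1)]
  rcases eq_or_ne u1 0 with h' | h'
  · subst h'; nlinarith [sq_nonneg (u0*z0)]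
  have hu0 : 0 < u0^2 := by positivity
  have hu1 : 0 < u1^2 := by positivity
  have h2' : z0^4 * u1^12 + (u1^3*z1)^4 = u1^12 := by linear_combination u1^12 * h2
  have hz1 : u1^3 * z1 = -(u0^3 * z0) := by linarith
  rw [hz1] at h2'
  have hr : z0^4 * (u0^12 + u1^12) = u1^12 := by linear_combination h2'
  have h13 : (u0^4 + u1^4)^3 = 1 := by rw [h1]; norm_num
  have hle : u0^12 + u1^12 ≤ 1 := by
    nlinarith [h13, show (0:ℝ) ≤ u0^8*u1^4 by positivity, show (0:ℝ) ≤ u0^4*u1^8 by positivity]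
  have hz04 : u1^12 ≤ z0^4 := by nlinarith [show (0:ℝ) ≤ z0^4 by positivity]
  have hz02 : u1^6 ≤ z0^2 := by
    nlinarith [hz04, sq_nonneg z0, show (0:ℝ) < u1^6 by positivity]
  have e : u1^2*z1^2*u1^6 = u0^6*z0^2*u1^2 := by
    linear_combination (u1^2*(u1^3*z1 - u0^3*z0)) * h3
  have h1z : u0^2*u1^2*z0^2*(u0^4+u1^4) = u0^2*u1^2*z0^2 := by rw [h1]; ring
  have t := mul_le_mul_of_nonneg_left hz02 (show (0:ℝ) ≤ u0^2*u1^2 by positivity)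
  have key : u0^2*u1^2*u1^6 ≤ (u0^2*z0^2 + u1^2*z1^2)*u1^6 := by nlinarith [e, h1z, t]
  exact le_of_mul_le_mul_right key (by positivity)

lemma cs4 (u0 u1 z0 z1 : ℝ) (h2 : z0^4+z1^4 = 1) :
    (u0*z0^3+u1*z1^3)^2 ≤ u0^2*z0^2 + u1^2*z1^2 := by
  nlinarith [sq_nonneg (u0*z0*z1^2 - u1*z1*z0^2), sq_nonneg (z0*z1)]

noncomputable def mk2 (a b : ℝ) : L4 := (WithLp.equiv 4 (Fin 2 → ℝ)).symm ![a, b]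
@[simp] lemma mk2_0 (a b : ℝ) : mk2 a b 0 = a := rfl
@[simp] lemma mk2_1 (a b : ℝ) : mk2 a b 1 = b := rfl

-- case A : v on axis => CPP for arbitrary unit u
lemma cppA (u v : L4) (hu : ‖u‖ = 1) (hv : ‖v‖ = 1) (hvax : v 0 * v 1 = 0) :
    IsCPP u v := by
  refine ⟨1, one_pos, 1/2, by norm_num, ?_⟩
  intro z hz hbz w hw hbw a b _ hone
  have hu4 : (u 0)^4 + (u 1)^4 = 1 := by
    have := (norm_eq4 u 1 one_pos.le).1 hu; simpa using this
  have hz4 : (z 0)^4 + (z 1)^4 = 1 := by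
    have := (norm_eq4 z 1 one_pos.le).1 hz; simpa using this
  have hv4 : (v 0)^4 + (v 1)^4 = 1 := by
    have := (norm_eq4 v 1 one_pos.le).1 hv; simpa using this
  have hw4 : (w 0)^4 + (w 1)^4 = 1 := by
    have := (norm_eq4 w 1 one_pos.le).1 hw; simpa using this
  have hD := bj_D u z hu hbz
  have hDv := bj_D v w hv hbw
  have hone4 : (a * u 0 + b * z 0)^4 + (a * u 1 + b * z 1)^4 = 1 := by
    have := (norm_eq4 _ 1 one_pos.le).1 hone
    simpa [PiLp.add_apply, PiLp.smul_apply] using this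
  obtain ⟨S, hS⟩ : ∃ S, S = (u 0)^2*(z 0)^2 + (u 1)^2*(z 1)^2 := ⟨_, rfl⟩
  obtain ⟨T, hT⟩ : ∃ T, T = (u 0)*(z 0)^3 + (u 1)*(z 1)^3 := ⟨_, rfl⟩
  have hexp : a^4 + 6*a^2*b^2*S + 4*a*b^3*T + b^4 = 1 := by
    rw [hS, hT]
    linear_combination hone4 - a^4*hu4 - b^4*hz4 - 4*a^3*b*hD
  have hcs : T^2 ≤ S := by rw [hS, hT]; exact cs4 _ _ _ _ hz4
  have hq : 0 ≤ 6*S*a^2 + 4*T*a*b + (2/3)*b^2 := by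
    nlinarith [sq_nonneg (3*T*a + b), sq_nonneg a]
  have hq2 : 0 ≤ (6*S*a^2 + 4*T*a*b + (2/3)*b^2) * b^2 :=
    mul_nonneg hq (sq_nonneg b)
  -- the target norm
  rw [norm_le4 _ 1 one_pos.le]
  simp only [PiLp.add_apply, PiLp.smul_apply, smul_eq_mul]
  rcases mul_eq_zero.1 hvax with h0 | h0
  · -- v 0 = 0, so (v 1)^4 = 1 and w 1 = 0, (w 0)^4 = 1
    have hv1 : (v 1)^4 = 1 := by rw [h0] at hv4; simpa using hv4
    have hw1 : w 1 = 0 := by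
      have hv1n : v 1 ≠ 0 := fun hh => by rw [hh] at hv1; norm_num at hv1
      have : (v 1)^3 * w 1 = 0 := by rw [h0] at hDv; simpa using hDv
      exact (mul_eq_zero.1 this).resolve_left (pow_ne_zero 3 hv1n)
    have hw0 : (w 0)^4 = 1 := by rw [hw1] at hw4; simpa using hw4
    have e : (a * v 0 + b*(1/2) * w 0)^4 + (a * v 1 + b*(1/2) * w 1)^4
        = a^4 + (b/2)^4 := by
      rw [h0, hw1]
      linear_combination (b*(1/2))^4 * hw0 + a^4 * hv1
    rw [e]
    linarith [hexp, hq2, sq_nonneg (b^2)]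
  · -- v 1 = 0
    have hv0 : (v 0)^4 = 1 := by rw [h0] at hv4; simpa using hv4
    have hw0 : w 0 = 0 := by
      have hv0n : v 0 ≠ 0 := fun hh => by rw [hh] at hv0; norm_num at hv0
      have : (v 0)^3 * w 0 = 0 := by rw [h0] at hDv; simpa using hDv
      exact (mul_eq_zero.1 this).resolve_left (pow_ne_zero 3 hv0n)
    have hw1 : (w 1)^4 = 1 := by rw [hw0] at hw4; simpa using hw4
    have e : (a * v 0 + b*(1/2) * w 0)^4 + (a * v 1 + b*(1/2) * w 1)^4
        = a^4 + (b/2)^4 := by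
      rw [h0, hw0]
      linear_combination (b*(1/2))^4 * hw1 + a^4 * hv0
    rw [e]
    linarith [hexp, hq2, sq_nonneg (b^2)]

lemma sq_le_one_of_pow4 (x y : ℝ) (hx : x^4 ≤ 1) (hy : y^4 ≤ 1) : x^2*y^2 ≤ 1 := by
  nlinarith [sq_nonneg (x^2 - y^2), sq_nonneg (x^2 + y^2), sq_nonneg (x*y - 1), sq_nonneg (x*y + 1), sq_nonneg (x*y)]

lemma keyB1 (m a b S T : ℝ) (hmpos : 0 < m) (ha2 : 9/16 ≤ a^2) (hb2 : b^2 ≤ m^2/64)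
    (hT2 : T^2 ≤ 2) (hSm : m ≤ S) : m*b^2 ≤ 6*a^2*b^2*S + 4*a*b^3*T + b^4 := by
  have hbT : b^4*T^2 ≤ m^2*b^2/32 := by
    have k1 := mul_le_mul_of_nonneg_left hT2 (show (0:ℝ) ≤ b^4 by positivity)
    have k2 := mul_le_mul_of_nonneg_left hb2 (sq_nonneg b)
    nlinarith [k1, k2]
  have hsq := sq_nonneg (m*a*b + b^2*T)
  have hSm' : 6*a^2*b^2*m*m ≤ 6*a^2*b^2*S*m := by
    have h0 : (0:ℝ) ≤ 6*a^2*b^2*m := by positivity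
    nlinarith [mul_le_mul_of_nonneg_left hSm h0]
  have p1 := mul_le_mul_of_nonneg_right ha2 (show (0:ℝ) ≤ m^2*b^2 by positivity)
  have p2 : (0:ℝ) ≤ m*b^4 := by positivity
  have hmain : m*(m*b^2) ≤ m*(6*a^2*b^2*S + 4*a*b^3*T + b^4) := by nlinarith [hsq, hbT, hSm', p1, p2]
  exact le_of_mul_le_mul_left hmain hmpos

lemma keyB2 (a b' Sv Tv : ℝ) (ha2le : a^2 ≤ 1) (hb'2 : b'^2 ≤ 1) (hSv0 : 0 ≤ Sv)
    (hSv2 : Sv ≤ 2) (hTv2 : Tv^2 ≤ 2) :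
    6*a^2*b'^2*Sv + 4*a*b'^3*Tv + b'^4 ≤ 19*b'^2 := by
  have h3 : 6*a^2*b'^2*Sv ≤ 12*b'^2 := by
    have h : a^2*Sv ≤ 2 := by nlinarith [mul_le_mul_of_nonneg_right ha2le hSv0]
    nlinarith [mul_le_mul_of_nonneg_left h (show (0:ℝ) ≤ 6*b'^2 by positivity)]
  have h1 : 4*a*b'^3*Tv ≤ 2*(a*b'*Tv)^2 + 2*(b'^2)^2 := by
    nlinarith [sq_nonneg (a*b'*Tv - b'^2)]
  have h2 : (a*b'*Tv)^2 ≤ 2*b'^2 := by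
    have k1 := mul_le_mul_of_nonneg_right hTv2 (sq_nonneg b')
    have k2 := mul_le_mul_of_nonneg_right ha2le (mul_nonneg (sq_nonneg b') (sq_nonneg Tv))
    nlinarith [k1, k2]
  have hb'4 : (b'^2)^2 ≤ b'^2 := by nlinarith [sq_nonneg b', hb'2]
  nlinarith [h1, h2, h3, hb'4]

lemma keyB3 (m b : ℝ) (hmpos : 0 < m) (hmle : m ≤ 1/2) : 19*(b*(m/5))^2 ≤ m*b^2 := by
  nlinarith [mul_nonneg (mul_nonneg hmpos.le (sq_nonneg b)) (show (0:ℝ) ≤ 1 - (19/25)*m by linarith)]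

lemma keyB4 (m b : ℝ) (hmpos : 0 < m) (hmle : m ≤ 1/2) (hb2 : b^2 ≤ m^2/64) :
    (b*(m/5))^2 ≤ 1 := by
  have hm2 : m^2 ≤ 1/4 := by nlinarith
  have h := mul_le_mul hb2 hm2 (sq_nonneg m) (by positivity)
  nlinarith [h, sq_nonneg b]

-- case B : u not on axis => CPP for arbitrary unit v
lemma cppB (u v : L4) (hu : ‖u‖ = 1) (hv : ‖v‖ = 1) (hug : u 0 * u 1 ≠ 0) :
    IsCPP u v := by
  have hu4 : (u 0)^4 + (u 1)^4 = 1 := by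
    have := (norm_eq4 u 1 one_pos.le).1 hu; simpa using this
  have hv4 : (v 0)^4 + (v 1)^4 = 1 := by
    have := (norm_eq4 v 1 one_pos.le).1 hv; simpa using this
  obtain ⟨m, hm⟩ : ∃ m, m = (u 0)^2*(u 1)^2 := ⟨_, rfl⟩
  have hmpos : 0 < m := by
    rw [hm]
    rcases mul_ne_zero_iff.1 hug with ⟨h0, h1⟩
    positivity
  have hmle : m ≤ 1/2 := by rw [hm]; nlinarith [sq_nonneg ((u 0)^2 - (u 1)^2)]
  refine ⟨min (1/4) (m/16), by positivity, m/5, by positivity, ?_⟩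
  intro z hz hbz w hw hbw a b hr hone
  have hz4 : (z 0)^4 + (z 1)^4 = 1 := by
    have := (norm_eq4 z 1 one_pos.le).1 hz; simpa using this
  have hw4 : (w 0)^4 + (w 1)^4 = 1 := by
    have := (norm_eq4 w 1 one_pos.le).1 hw; simpa using this
  have hD := bj_D u z hu hbz
  have hDv := bj_D v w hv hbw
  have hone4 : (a * u 0 + b * z 0)^4 + (a * u 1 + b * z 1)^4 = 1 := by
    have := (norm_eq4 _ 1 one_pos.le).1 hone
    simpa [PiLp.add_apply, PiLp.smul_apply] using this
  -- bounds on a and b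
  have ha1 : |a| ≤ 1 := by
    have h := bj_lower u z hu hbz a b
    rwa [hone] at h
  have hesub : a • u + b • z - u = (a-1) • u + b • z := by
    rw [sub_smul, one_smul]; abel
  have har : |a-1| ≤ min (1/4) (m/16) := by
    have h := bj_lower u z hu hbz (a-1) b
    rw [← hesub] at h
    exact h.trans hr
  have hbr : |b| ≤ 2 * min (1/4) (m/16) := by
    have e2 : (b • z : L4) = (a • u + b • z - u) - (a-1) • u := by
      rw [hesub]; abel
    calc |b| = ‖b • z‖ := by rw [norm_smul, hz, Real.norm_eq_abs, mul_one]
    _ = ‖(a • u + b • z - u) - (a-1) • u‖ := congrArg Norm.norm e2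
    _ ≤ ‖a • u + b • z - u‖ + ‖(a-1) • u‖ := norm_sub_le _ _
    _ ≤ min (1/4) (m/16) + |a-1| := by
        rw [norm_smul, hu, Real.norm_eq_abs, mul_one]
        exact add_le_add_left hr _
    _ ≤ 2 * min (1/4) (m/16) := by linarith
  have hale : 3/4 ≤ a := by
    have h1 := (abs_le.1 har).1
    have h2 : min (1/4) (m/16) ≤ 1/4 := min_le_left _ _
    linarith
  have ha2 : 9/16 ≤ a^2 := by
    have := pow_le_pow_left₀ (by norm_num : (0:ℝ) ≤ 3/4) hale 2
    linarith
  have ha2le : a^2 ≤ 1 := by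
    have h := pow_le_pow_left₀ (abs_nonneg a) ha1 2
    have h2 := sq_abs a
    linarith [h, h2]
  have hbm : |b| ≤ m/8 := by
    have h2 : min (1/4) (m/16) ≤ m/16 := min_le_right _ _
    linarith
  have hb2 : b^2 ≤ m^2/64 := by
    calc b^2 = |b|^2 := (sq_abs b).symm
    _ ≤ (m/8)^2 := pow_le_pow_left₀ (abs_nonneg b) hbm 2
    _ = m^2/64 := by ring
  -- u side
  obtain ⟨S, hS⟩ : ∃ S, S = (u 0)^2*(z 0)^2 + (u 1)^2*(z 1)^2 := ⟨_, rfl⟩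
  obtain ⟨T, hT⟩ : ∃ T, T = (u 0)*(z 0)^3 + (u 1)*(z 1)^3 := ⟨_, rfl⟩
  have hexp : a^4 + 6*a^2*b^2*S + 4*a*b^3*T + b^4 = 1 := by
    rw [hS, hT]
    linear_combination hone4 - a^4*hu4 - b^4*hz4 - 4*a^3*b*hD
  have hcs : T^2 ≤ S := by rw [hS, hT]; exact cs4 _ _ _ _ hz4
  have hSm : m ≤ S := by rw [hS, hm]; exact n2 _ _ _ _ hu4 hz4 hD
  have hS2 : S ≤ 2 := by
    rw [hS]
    have b1 := sq_le_one_of_pow4 (u 0) (z 0) (by linarith [show (0:ℝ) ≤ (u 1)^4 by positivity]) (by linarith [show (0:ℝ) ≤ (z 1)^4 by positivity])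
    have b2 := sq_le_one_of_pow4 (u 1) (z 1) (by linarith [show (0:ℝ) ≤ (u 0)^4 by positivity]) (by linarith [show (0:ℝ) ≤ (z 0)^4 by positivity])
    linarith
  have hT2 : T^2 ≤ 2 := hcs.trans hS2
  have hukey : m*b^2 ≤ 6*a^2*b^2*S + 4*a*b^3*T + b^4 :=
    keyB1 m a b S T hmpos ha2 hb2 hT2 hSm
  -- v side
  obtain ⟨Sv, hSv⟩ : ∃ Sv, Sv = (v 0)^2*(w 0)^2 + (v 1)^2*(w 1)^2 := ⟨_, rfl⟩
  obtain ⟨Tv, hTv⟩ : ∃ Tv, Tv = (v 0)*(w 0)^3 + (v 1)*(w 1)^3 := ⟨_, rfl⟩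
  have hexpv : (a * v 0 + (b*(m/5)) * w 0)^4 + (a * v 1 + (b*(m/5)) * w 1)^4
      = a^4 + 6*a^2*(b*(m/5))^2*Sv + 4*a*(b*(m/5))^3*Tv + (b*(m/5))^4 := by
    rw [hSv, hTv]
    linear_combination a^4*hv4 + (b*(m/5))^4*hw4 + 4*a^3*(b*(m/5))*hDv
  have hcsv : Tv^2 ≤ Sv := by rw [hSv, hTv]; exact cs4 _ _ _ _ hw4
  have hSv0 : 0 ≤ Sv := by rw [hSv]; positivity
  have hSv2 : Sv ≤ 2 := by
    rw [hSv]
    have b1 := sq_le_one_of_pow4 (v 0) (w 0) (by linarith [show (0:ℝ) ≤ (v 1)^4 by positivity]) (by linarith [show (0:ℝ) ≤ (w 1)^4 by positivity])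
    have b2 := sq_le_one_of_pow4 (v 1) (w 1) (by linarith [show (0:ℝ) ≤ (v 0)^4 by positivity]) (by linarith [show (0:ℝ) ≤ (w 0)^4 by positivity])
    linarith
  have hTv2 : Tv^2 ≤ 2 := hcsv.trans hSv2
  have hb'2 : (b*(m/5))^2 ≤ 1 := keyB4 m b hmpos hmle hb2
  have hvbound : 6*a^2*(b*(m/5))^2*Sv + 4*a*(b*(m/5))^3*Tv + (b*(m/5))^4 ≤ 19*(b*(m/5))^2 :=
    keyB2 a (b*(m/5)) Sv Tv ha2le hb'2 hSv0 hSv2 hTv2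
  have hfin : 19*(b*(m/5))^2 ≤ m*b^2 := keyB3 m b hmpos hmle
  -- conclude
  rw [norm_le4 _ 1 one_pos.le]
  simp only [PiLp.add_apply, PiLp.smul_apply, smul_eq_mul]
  rw [show a * v 0 + b * (m/5) * w 0 = a * v 0 + (b*(m/5)) * w 0 by ring,
      show a * v 1 + b * (m/5) * w 1 = a * v 1 + (b*(m/5)) * w 1 by ring, hexpv]
  linarith [hvbound, hfin, hukey, hexp]

lemma axis_z (u : L4) (hu : ‖u‖ = 1) (h0 : u 0 * u 1 = 0) :
    ∃ z : L4, ‖z‖ = 1 ∧ BJOrth u z ∧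
      (∀ a b : ℝ, ((a • u + b • z) 0)^4 + ((a • u + b • z) 1)^4 = a^4 + b^4) ∧
      (∀ a b : ℝ, ((a • u + b • z - u) 0)^4 + ((a • u + b • z - u) 1)^4 = (a-1)^4 + b^4) := by
  have hu4 : (u 0)^4 + (u 1)^4 = 1 := by
    have := (norm_eq4 u 1 one_pos.le).1 hu; simpa using this
  rcases mul_eq_zero.1 h0 with h | h
  · -- u 0 = 0
    have hu1 : (u 1)^4 = 1 := by rw [h] at hu4; simpa using hu4
    refine ⟨mk2 1 0, ?_, ?_, ?_, ?_⟩
    · rw [norm_eq4 _ 1 one_pos.le]; norm_num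
    · intro t
      rw [hu, norm_ge4 _ 1 one_pos.le]
      have e0 : (u + t • mk2 1 0) 0 = t := by
        simp [PiLp.add_apply, PiLp.smul_apply, h]
      have e1 : (u + t • mk2 1 0) 1 = u 1 := by
        simp [PiLp.add_apply, PiLp.smul_apply]
      rw [e0, e1, hu1]
      have : (0:ℝ) ≤ t^4 := by positivity
      norm_num; linarith
    · intro a b
      have e0 : (a • u + b • mk2 1 0) 0 = b := by
        simp [PiLp.add_apply, PiLp.smul_apply, h]
      have e1 : (a • u + b • mk2 1 0) 1 = a * u 1 := by
        simp [PiLp.add_apply, PiLp.smul_apply]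
      rw [e0, e1]
      linear_combination a^4 * hu1
    · intro a b
      have e0 : (a • u + b • mk2 1 0 - u) 0 = b := by
        simp [PiLp.sub_apply, PiLp.add_apply, PiLp.smul_apply, h]
      have e1 : (a • u + b • mk2 1 0 - u) 1 = (a-1) * u 1 := by
        simp [PiLp.sub_apply, PiLp.add_apply, PiLp.smul_apply]; ring
      rw [e0, e1]
      linear_combination (a-1)^4 * hu1
  · -- u 1 = 0
    have hu0 : (u 0)^4 = 1 := by rw [h] at hu4; simpa using hu4
    refine ⟨mk2 0 1, ?_, ?_, ?_, ?_⟩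
    · rw [norm_eq4 _ 1 one_pos.le]; norm_num
    · intro t
      rw [hu, norm_ge4 _ 1 one_pos.le]
      have e0 : (u + t • mk2 0 1) 0 = u 0 := by
        simp [PiLp.add_apply, PiLp.smul_apply]
      have e1 : (u + t • mk2 0 1) 1 = t := by
        simp [PiLp.add_apply, PiLp.smul_apply, h]
      rw [e0, e1, hu0]
      have : (0:ℝ) ≤ t^4 := by positivity
      norm_num; linarith
    · intro a b
      have e0 : (a • u + b • mk2 0 1) 0 = a * u 0 := by
        simp [PiLp.add_apply, PiLp.smul_apply]
      have e1 : (a • u + b • mk2 0 1) 1 = b := by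
        simp [PiLp.add_apply, PiLp.smul_apply, h]
      rw [e0, e1]
      linear_combination a^4 * hu0
    · intro a b
      have e0 : (a • u + b • mk2 0 1 - u) 0 = (a-1) * u 0 := by
        simp [PiLp.sub_apply, PiLp.add_apply, PiLp.smul_apply]; ring
      have e1 : (a • u + b • mk2 0 1 - u) 1 = b := by
        simp [PiLp.sub_apply, PiLp.add_apply, PiLp.smul_apply, h]
      rw [e0, e1]
      linear_combination (a-1)^4 * hu0

lemma keyN1 (a bb r : ℝ) (hapos : 0 < a) (hale1 : a ≤ 1) (ha4 : a^4 = 1 - bb^4)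
    (hbpos : 0 < bb) (hb12 : bb ≤ 1/2) (hbr : bb ≤ r/2) (hr : 0 < r) :
    (a-1)^4 + bb^4 ≤ r^4 := by
  have h1 : 1 - a ≤ bb^4 := by
    have := pow_le_of_le_one hapos.le hale1 (by norm_num : (4:ℕ) ≠ 0)
    linarith
  have h0 : 0 ≤ 1 - a := by linarith
  have h2 : (a-1)^4 ≤ bb^16 := by
    have := pow_le_pow_left₀ h0 h1 4
    calc (a-1)^4 = (1-a)^4 := by ring
    _ ≤ (bb^4)^4 := this
    _ = bb^16 := by ring
  have hb1 : bb ≤ 1 := by linarith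
  have h3 : bb^16 ≤ bb^4 := by
    apply pow_le_pow_of_le_one hbpos.le hb1 (by norm_num)
  have h4 : bb^4 ≤ (r/2)^4 := pow_le_pow_left₀ hbpos.le hbr 4
  have h5 : (r/2)^4 = r^4/16 := by ring
  nlinarith [pow_pos hr 4]

lemma keyN2 (x y : ℝ) (h : x^4 + y^4 = 1) : (x*y*(y^8 - x^8))^2 ≤ 1 := by
  have t1 : x^2*y^2 ≤ 1/2 := by nlinarith [sq_nonneg (x^2 - y^2)]
  have h4 : (x^4+y^4)^4 = 1 := by rw [h]; norm_num
  have t2 : (y^8 - x^8)^2 ≤ 1 := by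
    nlinarith [h4, mul_nonneg (mul_nonneg (show (0:ℝ) ≤ x^4 by positivity)
      (show (0:ℝ) ≤ y^4 by positivity)) (sq_nonneg (x^4+y^4))]
  have t3 := mul_le_mul t1 t2 (sq_nonneg (y^8 - x^8)) (by norm_num)
  nlinarith [t3]

lemma keyN3 (a B : ℝ) (ha : 0 < a) (ha1 : a ≤ 1) (hB2 : B^2 ≤ 1) : -1 ≤ a*B := by
  have ha2 : a^2 ≤ 1 := by nlinarith
  have h : a^2*B^2 ≤ 1 := by nlinarith [sq_nonneg B, sq_nonneg a]
  nlinarith [sq_nonneg (a*B + 1)]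

lemma keyN4 (mv μ bb a β B C : ℝ)
    (hmv : 0 < mv) (hμ : 0 < μ) (hbb : 0 < bb) (hbb1 : bb ≤ 1/2)
    (ha2 : 3/4 ≤ a^2) (ha4 : a^4 = 1 - bb^4)
    (hβlb : bb*μ ≤ β) (hβub : β ≤ 2*bb*μ) (hβpos : 0 < β)
    (haB : -1 ≤ a*B) (hC : 0 ≤ C)
    (hbμ : (64*μ^3+1)*bb ≤ mv*μ^2) :
    1 < a^4 + 6*a^2*β^2*mv + 4*a*β^3*B + β^4*C := by
  have hβ3 : β^3 ≤ 8*bb^3*μ^3 := by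
    have := pow_le_pow_left₀ hβpos.le hβub 3
    linarith [this]
  have hcube : -(32*bb^3*μ^3) ≤ 4*a*β^3*B := by
    have h0 : (0:ℝ) ≤ 4*β^3 := by positivity
    have t1 := mul_le_mul_of_nonneg_left haB h0
    linarith [t1, hβ3]
  have hβ2 : (bb*μ)^2 ≤ β^2 := pow_le_pow_left₀ (by positivity) hβlb 2
  have hsq : (9/2)*mv*μ^2*bb^2 ≤ 6*a^2*β^2*mv := by
    have t1 : (3/4)*(bb*μ)^2 ≤ a^2*β^2 := by
      have t2 := mul_le_mul_of_nonneg_right ha2 (sq_nonneg β)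
      linarith [hβ2, t2]
    have t3 := mul_le_mul_of_nonneg_right t1 hmv.le
    linarith [t3]
  have hC4 : 0 ≤ β^4*C := by positivity
  have hbmv : bb ≤ mv*μ^2 := by
    have : (0:ℝ) ≤ 64*μ^3*bb := by positivity
    linarith
  have hbb2 : bb^2 ≤ mv*μ^2/2 := by
    have t1 := mul_le_mul_of_nonneg_right hbb1 hbb.le
    linarith [t1, hbmv]
  have h32 : 32*μ^3*bb^3 ≤ (mv*μ^2/2)*bb^2 := by
    have t1 : 64*μ^3*bb ≤ mv*μ^2 := by linarith [hbμ, hbb.le]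
    have t2 := mul_le_mul_of_nonneg_right t1 (sq_nonneg bb)
    linarith [t2]
  have hbb4 : bb^4 ≤ (mv*μ^2/2)*bb^2 := by
    have t1 := mul_le_mul_of_nonneg_right hbb2 (sq_nonneg bb)
    linarith [t1]
  have hpos : 0 < (mv*μ^2)*bb^2 := by positivity
  linarith [hcube, hsq, hC4, h32, hbb4, hpos, ha4]

lemma notcpp (u v : L4) (hu : ‖u‖ = 1) (hv : ‖v‖ = 1)
    (h0 : u 0 * u 1 = 0) (hg : v 0 * v 1 ≠ 0) : ¬ IsCPP u v := by
  rintro ⟨r, hr, μ, hμ, H⟩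
  obtain ⟨z, hz, hbz, hE1, hE2⟩ := axis_z u hu h0
  obtain ⟨hv0n, hv1n⟩ := mul_ne_zero_iff.1 hg
  have hv4 : (v 0)^4 + (v 1)^4 = 1 := by
    have := (norm_eq4 v 1 one_pos.le).1 hv; simpa using this
  obtain ⟨mv, hmv⟩ : ∃ mv, mv = (v 0)^2*(v 1)^2 := ⟨_, rfl⟩
  have hmvpos : 0 < mv := by rw [hmv]; positivity
  obtain ⟨C, hC⟩ : ∃ C, C = (v 0)^12 + (v 1)^12 := ⟨_, rfl⟩
  have hCpos : 0 < C := by rw [hC]; positivity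
  obtain ⟨c, hc⟩ : ∃ c, c = C ^ ((4:ℝ)⁻¹) := ⟨_, rfl⟩
  have hcpos : 0 < c := by rw [hc]; exact Real.rpow_pos_of_pos hCpos _
  have hc4 : c^4 = C := by
    rw [hc, ← Real.rpow_natCast (C ^ ((4:ℝ)⁻¹)) 4, ← Real.rpow_mul hCpos.le]
    norm_num
  have hCle1 : C ≤ 1 := by
    rw [hC]
    have h13 : ((v 0)^4 + (v 1)^4)^3 = 1 := by rw [hv4]; norm_num
    nlinarith [h13, show (0:ℝ) ≤ (v 0)^8*(v 1)^4 by positivity,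
      show (0:ℝ) ≤ (v 0)^4*(v 1)^8 by positivity]
  have hcle1 : c ≤ 1 := by
    rw [hc]; exact Real.rpow_le_one hCpos.le hCle1 (by norm_num)
  have hCge : 1/4 ≤ C := by
    rw [hC]
    have h13 : ((v 0)^4 + (v 1)^4)^3 = 1 := by rw [hv4]; norm_num
    linarith [h13, mul_nonneg (show (0:ℝ) ≤ (v 0)^4 + (v 1)^4 by positivity)
      (sq_nonneg ((v 0)^4 - (v 1)^4))]
  have hcge : 1/2 ≤ c := by
    by_contra hcc
    push_neg at hcc
    have := pow_lt_pow_left₀ hcc hcpos.le (by norm_num : (4:ℕ) ≠ 0)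
    rw [hc4] at this
    norm_num at this
    linarith
  -- the orthogonal direction w
  obtain ⟨w, hwdef⟩ : ∃ w : L4, w = mk2 ((v 1)^3/c) (-(v 0)^3/c) := ⟨_, rfl⟩
  have hw0 : w 0 = (v 1)^3/c := by rw [hwdef]; rfl
  have hw1 : w 1 = -(v 0)^3/c := by rw [hwdef]; rfl
  have hw : ‖w‖ = 1 := by
    rw [norm_eq4 _ 1 one_pos.le, hw0, hw1]
    have e : ((v 1)^3/c)^4 + (-(v 0)^3/c)^4 = ((v 0)^12 + (v 1)^12)/c^4 := by
      field_simp; ring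
    rw [e, hc4, hC, div_self (by positivity), one_pow]
  have hbw : BJOrth v w := by
    intro t
    rw [hv, norm_ge4 _ 1 one_pos.le]
    have e0 : (v + t • w) 0 = v 0 + (t/c)*(v 1)^3 := by
      simp [PiLp.add_apply, PiLp.smul_apply, hw0]; ring
    have e1 : (v + t • w) 1 = v 1 - (t/c)*(v 0)^3 := by
      simp [PiLp.add_apply, PiLp.smul_apply, hw1]; ring
    rw [e0, e1]
    calc (1:ℝ)^4 = (v 0)^4 + (v 1)^4 := by rw [hv4]; norm_num
    _ ≤ _ := n1 (v 0) (v 1) (t/c)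
  -- choose b
  obtain ⟨bb, hbbdef⟩ : ∃ bb : ℝ, bb = min (r/2) (min (1/2) (mv*μ^2/(64*μ^3+1))) := ⟨_, rfl⟩
  have hbbpos : 0 < bb := by
    rw [hbbdef]
    apply lt_min (by positivity)
    exact lt_min (by norm_num) (by positivity)
  have hbbr : bb ≤ r/2 := hbbdef ▸ min_le_left _ _
  have hbb12 : bb ≤ 1/2 := hbbdef ▸ le_trans (min_le_right _ _) (min_le_left _ _)
  have hbbμ : (64*μ^3+1)*bb ≤ mv*μ^2 := by
    have h1 : bb ≤ mv*μ^2/(64*μ^3+1) := hbbdef ▸ le_trans (min_le_right _ _) (min_le_right _ _)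
    have h2 : (0:ℝ) < 64*μ^3+1 := by positivity
    rw [le_div_iff₀ h2] at h1
    linarith
  -- choose a
  obtain ⟨a, hadef⟩ : ∃ a : ℝ, a = (1 - bb^4) ^ ((4:ℝ)⁻¹) := ⟨_, rfl⟩
  have hb4 : bb^4 ≤ 1/16 := by
    have := pow_le_pow_left₀ hbbpos.le hbb12 4
    norm_num at this
    linarith
  have h1b : 0 < 1 - bb^4 := by linarith
  have ha4 : a^4 = 1 - bb^4 := by
    rw [hadef, ← Real.rpow_natCast ((1 - bb^4) ^ ((4:ℝ)⁻¹)) 4, ← Real.rpow_mul h1b.le]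
    norm_num
  have hapos : 0 < a := hadef ▸ Real.rpow_pos_of_pos h1b _
  have hale1 : a ≤ 1 := hadef ▸ Real.rpow_le_one h1b.le (by linarith [pow_pos hbbpos 4]) (by norm_num)
  have ha2 : 3/4 ≤ a^2 := by
    nlinarith [ha4, hb4, sq_nonneg a, sq_nonneg (a^2 - 3/4), sq_nonneg (a^2 + 3/4)]
  -- feed the CPP hypothesis
  have cond2 : ‖a • u + bb • z‖ = 1 := by
    rw [norm_eq4 _ 1 one_pos.le, hE1]
    rw [ha4]; ring
  have cond1 : ‖a • u + bb • z - u‖ ≤ r := by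
    rw [norm_le4 _ r hr.le, hE2]
    exact keyN1 a bb r hapos hale1 ha4 hbbpos hbb12 hbbr hr
  have hfinal := H z hz hbz w hw hbw a bb cond1 cond2
  rw [norm_le4 _ 1 one_pos.le] at hfinal
  -- rewrite the coordinates
  obtain ⟨β, hβ⟩ : ∃ β, β = bb*μ/c := ⟨_, rfl⟩
  have e0 : (a • v + (bb*μ) • w) 0 = a * v 0 + β*(v 1)^3 := by
    simp [PiLp.add_apply, PiLp.smul_apply, hw0, hβ]; ring
  have e1 : (a • v + (bb*μ) • w) 1 = a * v 1 - β*(v 0)^3 := by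
    simp [PiLp.add_apply, PiLp.smul_apply, hw1, hβ]; ring
  rw [e0, e1] at hfinal
  obtain ⟨B, hB⟩ : ∃ B, B = (v 0)*(v 1)*((v 1)^8 - (v 0)^8) := ⟨_, rfl⟩
  have hval : (a * v 0 + β*(v 1)^3)^4 + (a * v 1 - β*(v 0)^3)^4
      = a^4 + 6*a^2*β^2*mv + 4*a*β^3*B + β^4*C := by
    rw [hmv, hB, hC]
    linear_combination (a^4 + 6*a^2*β^2*(v 0)^2*(v 1)^2) * hv4
  rw [hval] at hfinal
  -- derive the contradiction
  have hβc : β * c = bb * μ := by rw [hβ]; field_simp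
  have hβpos : 0 < β := by
    rw [hβ]; positivity
  have hβub : β ≤ 2*bb*μ := by
    have h1 := mul_nonneg hβpos.le (show (0:ℝ) ≤ 2*c - 1 by linarith)
    linarith [h1, hβc]
  have hβlb : bb*μ ≤ β := by
    have h1 := mul_nonneg hβpos.le (show (0:ℝ) ≤ 1 - c by linarith)
    linarith [h1, hβc]
  have hB2 : B^2 ≤ 1 := hB ▸ keyN2 (v 0) (v 1) hv4
  have haB : -1 ≤ a*B := keyN3 a B hapos hale1 hB2
  have hcontra := keyN4 mv μ bb a β B C hmvpos hμ hbbpos hbb12 ha2 ha4 hβlb hβub hβpos haB hCpos.le hbbμ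
  norm_num at hfinal
  linarith

theorem stmt9 (u v : L4) (hu : ‖u‖ = 1) (hv : ‖v‖ = 1) :
    ¬ IsCPP u v ↔ (u 0 * u 1 = 0 ∧ v 0 * v 1 ≠ 0) := by
  constructor
  · intro hn
    by_contra hc
    push_neg at hc
    rcases eq_or_ne (u 0 * u 1) 0 with h | h
    · exact hn (cppA u v hu hv (hc h))
    · exact hn (cppB u v hu hv h)
  · rintro ⟨h1, h2⟩
    exact notcpp u v hu hv h1 h2
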